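/- For every d ≥ 1, every r ≥ 1 and every function C : ℕ^d → ℕ^r, there exist natural numbers x₁ < x₂ < ... < x_{d+1} such that C(x₁,...,x_d) ≤ C(x₂,...,x_{d+1}) in the coordinatewise partial order on ℕ^r. -/
import Mathlib

/-- `e` is an increasing sequence all of whose increasing `k`-tuples get color `c`. -/
def ARHomog {k : ℕ} {κ : Type} (f : (Fin k → ℕ) → κ) (e : ℕ → ℕ) (c : κ) : Prop :=
  ∀ x : Fin k → ℕ, StrictMono x → (∀ i, x i ∈ Set.range e) → f x = c

/-- Infinite Ramsey theorem for `k`-tuples from ℕ with finitely many colors. -/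
theorem ramsey_abs : ∀ (k : ℕ) {κ : Type} [Finite κ] (f : (Fin k → ℕ) → κ),
    ∃ (e : ℕ → ℕ) (c : κ), StrictMono e ∧ ARHomog f e c := by
  intro k
  induction k with
  | zero =>
    intro κ _ f
    refine ⟨id, f (fun i => i.elim0), strictMono_id, fun x _ _ => ?_⟩
    congr 1; funext i; exact i.elim0
  | succ k IH =>
    intro κ _ f
    -- relative version of the induction hypothesis
    have rel : ∀ (g : (Fin k → ℕ) → κ) (e : ℕ → ℕ), StrictMono e →
        ∃ (e' : ℕ → ℕ) (c : κ), StrictMono e' ∧ (∀ m, ∃ t, e t = e' m) ∧ ARHomog g e' c := by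
      intro g e he
      obtain ⟨e'', c, h1, h2⟩ := IH (fun x => g (e ∘ x))
      refine ⟨e ∘ e'', c, he.comp h1, fun m => ⟨e'' m, rfl⟩, ?_⟩
      intro x hx hxr
      choose m hm using hxr
      have hxm : x = e ∘ (e'' ∘ m) := funext fun i => (hm i).symm
      have hmono : StrictMono (e'' ∘ m) := by
        intro i j hij
        have h3 := hx hij
        rw [hxm] at h3
        exact he.lt_iff_lt.mp h3
      rw [hxm]
      exact h2 (e'' ∘ m) hmono (fun i => ⟨m i, rfl⟩)
    have key : ∀ s : {e : ℕ → ℕ // StrictMono e},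
        ∃ p : κ × {e : ℕ → ℕ // StrictMono e},
          (∀ m, ∃ t, s.1 (t + 1) = p.2.1 m) ∧
          ARHomog (fun y => f (Fin.cons (s.1 0) y)) p.2.1 p.1 := by
      rintro ⟨e, he⟩
      obtain ⟨e', c, h1, h2, h3⟩ := rel (fun y => f (Fin.cons (e 0) y))
        (fun n => e (n + 1)) (fun i j h => he (by omega))
      exact ⟨⟨c, ⟨e', h1⟩⟩, h2, h3⟩
    choose step hstep1 hstep2 using key
    let E : ℕ → {e : ℕ → ℕ // StrictMono e} :=
      fun n => Nat.rec ⟨id, strictMono_id⟩ (fun _ s => (step s).2) n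
    have hE : ∀ n, E (n + 1) = (step (E n)).2 := fun _ => rfl
    -- basic facts
    have hBmem : ∀ n m, (E (n + 1)).1 m ∈ Set.range (E n).1 ∧ (E n).1 0 < (E (n + 1)).1 m := by
      intro n m
      obtain ⟨t, ht⟩ := hstep1 (E n) m
      rw [← hE] at ht
      exact ⟨⟨t + 1, ht⟩, ht ▸ (E n).2 t.succ_pos⟩
    have hsub : ∀ n m, n ≤ m → ∀ x, x ∈ Set.range (E m).1 → x ∈ Set.range (E n).1 := by
      intro n m hnm
      induction hnm with
      | refl => exact fun x hx => hx
      | @step m' h ih =>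
        intro x hx
        obtain ⟨y, hy⟩ := hx
        exact ih x (hy ▸ (hBmem m' y).1)
    set a : ℕ → ℕ := fun n => (E n).1 0 with ha_def
    have ha : StrictMono a := strictMono_nat_of_lt_succ (fun n => (hBmem n 0).2)
    set col : ℕ → κ := fun n => (step (E n)).1 with hcol_def
    -- pigeonhole
    obtain ⟨c₀, hc₀⟩ := Finite.exists_infinite_fiber col
    have hN : (col ⁻¹' {c₀}).Infinite := Set.infinite_coe_iff.mp hc₀
    have hgt : ∀ b : ℕ, ∃ b' ∈ col ⁻¹' {c₀}, b < b' := hN.exists_gt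
    choose g hg1 hg2 using hgt
    let φ : ℕ → ℕ := fun j => Nat.rec (g 0) (fun _ x => g x) j
    have hφc : ∀ j, col (φ j) = c₀ := by
      intro j
      cases j with
      | zero => exact hg1 0
      | succ j => exact hg1 (φ j)
    have hφmono : StrictMono φ := strictMono_nat_of_lt_succ (fun j => hg2 (φ j))
    refine ⟨a ∘ φ, c₀, ha.comp hφmono, ?_⟩
    intro x hx hxr
    choose j hj using hxr
    set n := φ (j 0) with hn_def
    set y : Fin k → ℕ := fun i => x i.succ with hy_def
    have hymono : StrictMono y := fun i i' h => hx (Fin.succ_lt_succ_iff.mpr h)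
    have hyr : ∀ i, y i ∈ Set.range (E (n + 1)).1 := by
      intro i
      have h1 : x 0 < x i.succ := hx (Fin.succ_pos i)
      have h2 : a (φ (j 0)) = x 0 := hj 0
      have h3 : a (φ (j i.succ)) = x i.succ := hj i.succ
      have h4 : n < φ (j i.succ) := by
        have : a n < a (φ (j i.succ)) := by rw [h3, ← hn_def] at *; omega
        exact ha.lt_iff_lt.mp this
      have h5 : y i ∈ Set.range (E (φ (j i.succ))).1 := ⟨0, h3⟩
      exact hsub (n + 1) (φ (j i.succ)) h4 (y i) h5
    have hxeq : x = Fin.cons ((E n).1 0) y := by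
      funext i
      refine Fin.cases ?_ ?_ i
      · rw [Fin.cons_zero]; exact (hj 0).symm
      · intro i'; rw [Fin.cons_succ]
    have := hstep2 (E n) y hymono (by rw [← hE n]; exact hyr)
    rw [hxeq]
    simp only at this
    rw [this]
    exact hφc (j 0)

theorem adjacent_ramsey (d r : ℕ) (hd : 1 ≤ d) (hr : 1 ≤ r)
    (C : (Fin d → ℕ) → (Fin r → ℕ)) :
    ∃ x : Fin (d + 1) → ℕ, StrictMono x ∧
      C (fun i => x i.castSucc) ≤ C (fun i => x i.succ) := by
  classical
  obtain ⟨e, S, he, hS⟩ := ramsey_abs (d + 1) (κ := Finset (Fin r))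
    (fun x => Finset.univ.filter fun i =>
      ¬ C (fun j => x j.castSucc) i ≤ C (fun j => x j.succ) i)
  rcases eq_or_ne S ∅ with hSe | hSe
  · refine ⟨fun j => e j, fun i j h => he h, ?_⟩
    have h1 := hS (fun j : Fin (d + 1) => e j) (fun i j h => he h) (fun i => ⟨i, rfl⟩)
    rw [hSe, Finset.filter_eq_empty_iff] at h1
    intro i
    have := h1 (Finset.mem_univ i)
    simpa using this
  · exfalso
    obtain ⟨i, hi⟩ := Finset.nonempty_iff_ne_empty.mpr hSe
    set v : ℕ → ℕ := fun n => C (fun j : Fin d => e (n + j)) i with hv_def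
    have hdesc : ∀ n, v (n + 1) < v n := by
      intro n
      have h1 := hS (fun j : Fin (d + 1) => e (n + j))
        (fun i' j h => he (by have : (i' : ℕ) < j := h; omega)) (fun i' => ⟨n + i', rfl⟩)
      rw [← h1] at hi
      simp only [Finset.mem_filter, Finset.mem_univ, true_and] at hi
      have hfront : (fun j : Fin d => e (n + (j.castSucc : ℕ))) = fun j : Fin d => e (n + j) := by
        funext j; simp
      have hback : (fun j : Fin d => e (n + (j.succ : ℕ))) = fun j : Fin d => e (n + 1 + j) := by
        funext j; congr 1; simp [Fin.val_succ]; omega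
      rw [hfront, hback] at hi
      simpa [hv_def] using hi
    have hle : ∀ n, v n + n ≤ v 0 := by
      intro n
      induction n with
      | zero => simp
      | succ n ih => have := hdesc n; omega
    have := hle (v 0 + 1)
    omega
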